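/- arXiv:2107.07358 — 4 statements merged into one kernel-verified Lean document; each statement's English description precedes it below -/
import Mathlib

section
/- Let S be a finite set of s ≥ 2 points in a Euclidean space ℝ^ℓ, let δ ≥ 2 and α ≥ 0, and suppose that ‖i−i'‖² ≥ δ·α for every pair of distinct points i, i' ∈ S. Then for every point j ∈ ℝ^ℓ, Σ_{i∈S} (α − ‖j−i‖²) ≤ (2 − δ/2)·α. -/
open RealInnerProductSpace


open Finset in
/-- Case B of the analysis of Ahmadian et al.: if `S` has `s ≥ 2` points that are
pairwise at squared distance at least `δ·α` with `δ ≥ 2`, `α ≥ 0`, then for every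
point `j`, `Σ_{i∈S} (α − ‖j−i‖²) ≤ (2 − δ/2)·α`. -/
theorem caseB_key_inequality {ℓ : ℕ} (S : Finset (EuclideanSpace ℝ (Fin ℓ)))
    (s : ℕ) (hS : S.card = s) (hs : 2 ≤ s) (δ α : ℝ) (hδ : δ ≥ 2) (hα : α ≥ 0)
    (hfar : ∀ i ∈ S, ∀ i' ∈ S, i ≠ i' → ‖i - i'‖ ^ 2 ≥ δ * α)
    (j : EuclideanSpace ℝ (Fin ℓ)) :
    ∑ i ∈ S, (α - ‖j - i‖ ^ 2) ≤ (2 - δ / 2) * α := by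
  classical
  set D : ℝ := ∑ i ∈ S, ‖i - j‖ ^ 2 with hDdef
  have h0 : (0:ℝ) ≤ ‖∑ i ∈ S, (i - j)‖ ^ 2 := sq_nonneg _
  have hexp : ‖∑ i ∈ S, (i - j)‖ ^ 2
      = ∑ i ∈ S, ∑ k ∈ S, (inner ℝ (i - j) (k - j) : ℝ) := by
    rw [← real_inner_self_eq_norm_sq, sum_inner]
    exact Finset.sum_congr rfl fun i _ => by rw [inner_sum]
  have hinner : ∀ i ∈ S, ∀ k ∈ S,
      (inner ℝ (i - j) (k - j) : ℝ) = (‖i - j‖ ^ 2 + ‖k - j‖ ^ 2 - ‖i - k‖ ^ 2) / 2 := by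
    intro i _ k _
    have h := norm_sub_sq_real (i - j) (k - j)
    have h2 : (i - j) - (k - j) = i - k := by abel
    rw [h2] at h
    linarith
  have hsum : ∑ i ∈ S, ∑ k ∈ S, (inner ℝ (i - j) (k - j) : ℝ)
      = (s : ℝ) * D - (∑ i ∈ S, ∑ k ∈ S, ‖i - k‖ ^ 2) / 2 := by
    rw [Finset.sum_congr rfl fun i hi =>
      Finset.sum_congr rfl fun k hk => hinner i hi k hk]
    have step : ∀ i ∈ S, ∑ k ∈ S, ((‖i - j‖ ^ 2 + ‖k - j‖ ^ 2 - ‖i - k‖ ^ 2) / 2)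
        = ((s : ℝ) * ‖i - j‖ ^ 2 + D - ∑ k ∈ S, ‖i - k‖ ^ 2) / 2 := by
      intro i _
      rw [← Finset.sum_div]
      congr 1
      rw [Finset.sum_sub_distrib, Finset.sum_add_distrib, Finset.sum_const, hS,
        nsmul_eq_mul, ← hDdef]
    rw [Finset.sum_congr rfl step, ← Finset.sum_div, Finset.sum_sub_distrib,
      Finset.sum_add_distrib, Finset.sum_const, hS, nsmul_eq_mul, ← Finset.mul_sum,
      ← hDdef]
    ring
  have hbd : (s : ℝ) * ((s : ℝ) - 1) * (δ * α) ≤ ∑ i ∈ S, ∑ k ∈ S, ‖i - k‖ ^ 2 := by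
    have h1 : ∀ i ∈ S, ((s : ℝ) - 1) * (δ * α) ≤ ∑ k ∈ S, ‖i - k‖ ^ 2 := by
      intro i hi
      have hsub : ∑ k ∈ S.erase i, ‖i - k‖ ^ 2 ≤ ∑ k ∈ S, ‖i - k‖ ^ 2 :=
        Finset.sum_le_sum_of_subset_of_nonneg (Finset.erase_subset i S)
          (fun k _ _ => sq_nonneg _)
      have hlow : ((S.erase i).card : ℝ) * (δ * α) ≤ ∑ k ∈ S.erase i, ‖i - k‖ ^ 2 := by
        have := Finset.card_nsmul_le_sum (S.erase i) (fun k => ‖i - k‖ ^ 2) (δ * α)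
          (fun k hk => hfar i hi k (Finset.mem_of_mem_erase hk)
            (Ne.symm (Finset.ne_of_mem_erase hk)))
        simpa [nsmul_eq_mul] using this
      have hcard : ((S.erase i).card : ℝ) = (s : ℝ) - 1 := by
        rw [Finset.card_erase_of_mem hi, hS]
        have : 1 ≤ s := le_trans (by norm_num) hs
        push_cast [Nat.cast_sub this]
        ring
      rw [hcard] at hlow
      linarith
    calc (s : ℝ) * ((s : ℝ) - 1) * (δ * α)
        = ∑ _i ∈ S, ((s : ℝ) - 1) * (δ * α) := by
          simp [Finset.sum_const, hS]; ring
      _ ≤ ∑ i ∈ S, ∑ k ∈ S, ‖i - k‖ ^ 2 := Finset.sum_le_sum h1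
  rw [hexp, hsum] at h0
  have hs2 : (2 : ℝ) ≤ (s : ℝ) := by exact_mod_cast hs
  have hD : ((s : ℝ) - 1) * (δ * α) / 2 ≤ D := by nlinarith
  have hfin : ∑ i ∈ S, (α - ‖j - i‖ ^ 2) = (s : ℝ) * α - D := by
    rw [Finset.sum_sub_distrib, Finset.sum_const, nsmul_eq_mul, hS, hDdef]
    congr 1
    exact Finset.sum_congr rfl fun i _ => by rw [norm_sub_rev]
  rw [hfin]
  nlinarith [mul_nonneg (mul_nonneg (by linarith : (0:ℝ) ≤ (s:ℝ) - 2) (by linarith : (0:ℝ) ≤ δ - 2)) hα]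
end

section
/- Let s ≥ 2 be an integer, let δ > 2 and α > 0 be reals, and let Δ be a real number with Δ ≥ (s−1)·δ·α/2. Then Δ − (s−1)·α > 0 and Δ/s ≤ (δ/4)/(δ/2 − 1) · (Δ − (s−1)·α). -/
/-- The refined Case B bound (arithmetic form): for an integer `s ≥ 2`, reals `δ > 2`,
`α > 0`, and `Δ ≥ (s−1)·δ·α/2`, one has `Δ − (s−1)·α > 0` and
`Δ/s ≤ (δ/4)/(δ/2 − 1) · (Δ − (s−1)·α)`. -/
theorem refined_caseB_arith (s : ℕ) (hs : 2 ≤ s) (δ α Δ : ℝ) (hδ : δ > 2) (hα : α > 0)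
    (hΔ : Δ ≥ ((s : ℝ) - 1) * δ * α / 2) :
    Δ - ((s : ℝ) - 1) * α > 0 ∧
      Δ / (s : ℝ) ≤ (δ / 4) / (δ / 2 - 1) * (Δ - ((s : ℝ) - 1) * α) := by
  have hs' : (2 : ℝ) ≤ (s : ℝ) := by exact_mod_cast hs
  have hs1 : (1 : ℝ) ≤ (s : ℝ) - 1 := by linarith
  have ht : ((s : ℝ) - 1) * α > 0 := by nlinarith
  have hpos : Δ - ((s : ℝ) - 1) * α > 0 := by nlinarith
  refine ⟨hpos, ?_⟩
  have h1 : δ / 2 - 1 > 0 := by linarith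
  have hs0 : (0 : ℝ) < (s : ℝ) := by linarith
  rw [div_le_iff₀ hs0, div_div, div_mul_eq_mul_div, div_mul_eq_mul_div, le_div_iff₀ (by positivity : (0:ℝ) < 4 * (δ/2-1))]
  nlinarith [mul_nonneg (mul_nonneg (sub_nonneg.2 hs') (by linarith : (0:ℝ) ≤ δ - 2)) hα.le,
    mul_nonneg (sub_nonneg.2 hs') (by nlinarith : (0:ℝ) ≤ δ * Δ - δ * (((s:ℝ)-1)*δ*α/2)),
    mul_pos ht h1]
end

section
/- Let S be a finite set of s ≥ 2 points in a Euclidean space ℝ^ℓ, let δ > 2 and α > 0, and suppose that ‖i−i'‖² ≥ δ·α for every pair of distinct points i, i' ∈ S. Then for every point j ∈ ℝ^ℓ, one has Σ_{i∈S} ‖j−i‖² − (s−1)·α > 0 and min_{i∈S} ‖j−i‖² ≤ (δ/4)/(δ/2 − 1) · (Σ_{i∈S} ‖j−i‖² − (s−1)·α). -/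
open Finset in
/-- Refined Case B analysis: if `S` has `s ≥ 2` points pairwise at squared distance at
least `δ·α` with `δ > 2`, `α > 0`, then for every point `j`,
`Σ_{i∈S} ‖j−i‖² − (s−1)·α > 0` and
`min_{i∈S} ‖j−i‖² ≤ (δ/4)/(δ/2−1) · (Σ_{i∈S} ‖j−i‖² − (s−1)·α)`. -/
theorem refined_caseB {ℓ : ℕ} (S : Finset (EuclideanSpace ℝ (Fin ℓ)))
    (s : ℕ) (hS : S.card = s) (hs : 2 ≤ s) (hSne : S.Nonempty)
    (δ α : ℝ) (hδ : δ > 2) (hα : α > 0)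
    (hfar : ∀ i ∈ S, ∀ i' ∈ S, i ≠ i' → ‖i - i'‖ ^ 2 ≥ δ * α)
    (j : EuclideanSpace ℝ (Fin ℓ)) :
    (∑ i ∈ S, ‖j - i‖ ^ 2) - ((s : ℝ) - 1) * α > 0 ∧
      S.inf' hSne (fun i => ‖j - i‖ ^ 2) ≤
        (δ / 4) / (δ / 2 - 1) * ((∑ i ∈ S, ‖j - i‖ ^ 2) - ((s : ℝ) - 1) * α) := by
  classical
  set D := ∑ i ∈ S, ‖j - i‖ ^ 2 with hD
  have hsR : (2:ℝ) ≤ (s:ℝ) := by exact_mod_cast hs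
  have hspos : (0:ℝ) < (s:ℝ) := by linarith
  -- double-sum identity
  have hident : ∑ i ∈ S, ∑ i' ∈ S, ‖i - i'‖ ^ 2
      = 2 * (s:ℝ) * D - 2 * ‖∑ i ∈ S, (j - i)‖ ^ 2 := by
    have hterm : ∀ i ∈ S, ∀ i' ∈ S, ‖i - i'‖ ^ 2
        = ‖j - i'‖ ^ 2 - 2 * (inner ℝ (j - i') (j - i) : ℝ) + ‖j - i‖ ^ 2 := by
      intro i _ i' _
      rw [show (i : EuclideanSpace ℝ (Fin ℓ)) - i' = (j - i') - (j - i) by abel,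
        norm_sub_sq_real]
    rw [Finset.sum_congr rfl fun i hi => Finset.sum_congr rfl fun i' hi' => hterm i hi i' hi']
    simp only [Finset.sum_add_distrib, Finset.sum_sub_distrib, ← Finset.mul_sum,
      ← sum_inner, ← inner_sum, Finset.sum_const, hS, nsmul_eq_mul, real_inner_self_eq_norm_sq]
    ring
  -- lower bound on the double sum from pairwise separation
  have hlow : (s:ℝ) * (((s:ℝ) - 1) * (δ * α)) ≤ ∑ i ∈ S, ∑ i' ∈ S, ‖i - i'‖ ^ 2 := by
    have hinner : ∀ i ∈ S, ((s:ℝ) - 1) * (δ * α) ≤ ∑ i' ∈ S, ‖i - i'‖ ^ 2 := by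
      intro i hi
      have h1 : ∑ i' ∈ S.erase i, (δ * α) ≤ ∑ i' ∈ S.erase i, ‖i - i'‖ ^ 2 := by
        refine Finset.sum_le_sum fun i' hi' => ?_
        exact hfar i hi i' (Finset.mem_of_mem_erase hi')
          (fun h => (Finset.ne_of_mem_erase hi') h.symm)
      have h2 : ∑ i' ∈ S.erase i, ‖i - i'‖ ^ 2 ≤ ∑ i' ∈ S, ‖i - i'‖ ^ 2 := by
        refine Finset.sum_le_sum_of_subset_of_nonneg (Finset.erase_subset i S)
          fun i' _ _ => by positivity
      have hcard : ((S.erase i).card : ℝ) = (s:ℝ) - 1 := by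
        rw [Finset.card_erase_of_mem hi, hS]
        have : 1 ≤ s := by omega
        push_cast [Nat.cast_sub this]
        ring
      calc ((s:ℝ) - 1) * (δ * α) = ∑ _i' ∈ S.erase i, (δ * α) := by
            rw [Finset.sum_const, nsmul_eq_mul, hcard]
        _ ≤ _ := le_trans h1 h2
    calc (s:ℝ) * (((s:ℝ) - 1) * (δ * α)) = ∑ _i ∈ S, ((s:ℝ) - 1) * (δ * α) := by
          rw [Finset.sum_const, nsmul_eq_mul, hS]
      _ ≤ _ := Finset.sum_le_sum hinner
  -- key bound: (s-1)·δ·α ≤ 2·D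
  have hkey : ((s:ℝ) - 1) * (δ * α) ≤ 2 * D := by
    have h1 : (s:ℝ) * (((s:ℝ) - 1) * (δ * α)) ≤ (s:ℝ) * (2 * D) := by
      have := sq_nonneg ‖∑ i ∈ S, (j - i)‖
      nlinarith [hlow, hident]
    exact le_of_mul_le_mul_left h1 hspos
  have hfirst : D - ((s : ℝ) - 1) * α > 0 := by
    nlinarith [mul_pos (show (0:ℝ) < (s:ℝ) - 1 by linarith)
      (mul_pos (show (0:ℝ) < δ - 2 by linarith) hα)]
  refine ⟨hfirst, ?_⟩
  set m := S.inf' hSne (fun i => ‖j - i‖ ^ 2) with hm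
  have hm0 : 0 ≤ m := Finset.le_inf' hSne _ fun i _ => by positivity
  have hsm : (s:ℝ) * m ≤ D := by
    have h1 : ∑ _i ∈ S, m ≤ ∑ i ∈ S, ‖j - i‖ ^ 2 :=
      Finset.sum_le_sum fun i hi => Finset.inf'_le _ hi
    rw [Finset.sum_const, nsmul_eq_mul, hS] at h1
    exact h1
  have h2m : 2 * m ≤ D := by nlinarith
  rw [div_mul_eq_mul_div, le_div_iff₀ (show (0:ℝ) < δ / 2 - 1 by linarith)]
  nlinarith [mul_le_mul_of_nonneg_left h2m (show (0:ℝ) ≤ δ - 2 by linarith)]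
end

section
/- δ₀ := (1/2)·(2 + (3−2√2)^{1/3} + (3+2√2)^{1/3}) is the unique real number δ with δ > 2 satisfying (δ/4)/(δ/2 − 1) = (1 + √δ)². -/
/-- The optimal parameter `δ₀` of the refined analysis. -/
noncomputable def δ₀ : ℝ :=
  (1 / 2) * (2 + (3 - 2 * Real.sqrt 2) ^ ((1 : ℝ) / 3) + (3 + 2 * Real.sqrt 2) ^ ((1 : ℝ) / 3))

set_option maxHeartbeats 1600000 in
/-- `δ₀` is the unique real `δ > 2` with `(δ/4)/(δ/2 − 1) = (1 + √δ)²`. -/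
theorem δ₀_unique :
    (δ₀ > 2 ∧ (δ₀ / 4) / (δ₀ / 2 - 1) = (1 + Real.sqrt δ₀) ^ 2) ∧
      ∀ δ : ℝ, δ > 2 → (δ / 4) / (δ / 2 - 1) = (1 + Real.sqrt δ) ^ 2 → δ = δ₀ := by
  have hT : ∃ t : ℝ, t ^ 3 = 3 * t + 6 ∧ δ₀ = 1 + t / 2 := by
    have hsqrt2 : Real.sqrt 2 ^ 2 = 2 := Real.sq_sqrt (by norm_num)
    have hsqrt2le : Real.sqrt 2 ≤ 3 / 2 := by nlinarith [Real.sqrt_nonneg 2]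
    have hnn1 : (0:ℝ) ≤ 3 - 2 * Real.sqrt 2 := by linarith
    have hnn2 : (0:ℝ) ≤ 3 + 2 * Real.sqrt 2 := by nlinarith [Real.sqrt_nonneg 2]
    refine ⟨(3 - 2 * Real.sqrt 2) ^ ((1 : ℝ) / 3) + (3 + 2 * Real.sqrt 2) ^ ((1 : ℝ) / 3),
      ?_, by rw [δ₀]; ring⟩
    have ha0 : 0 ≤ (3 - 2 * Real.sqrt 2) ^ ((1 : ℝ) / 3) := Real.rpow_nonneg hnn1 _
    have hb0 : 0 ≤ (3 + 2 * Real.sqrt 2) ^ ((1 : ℝ) / 3) := Real.rpow_nonneg hnn2 _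
    have ha3 : ((3 - 2 * Real.sqrt 2) ^ ((1 : ℝ) / 3)) ^ 3 = 3 - 2 * Real.sqrt 2 := by
      rw [← Real.rpow_natCast ((3 - 2 * Real.sqrt 2) ^ ((1:ℝ)/3)) 3, ← Real.rpow_mul hnn1]
      norm_num
    have hb3 : ((3 + 2 * Real.sqrt 2) ^ ((1 : ℝ) / 3)) ^ 3 = 3 + 2 * Real.sqrt 2 := by
      rw [← Real.rpow_natCast ((3 + 2 * Real.sqrt 2) ^ ((1:ℝ)/3)) 3, ← Real.rpow_mul hnn2]
      norm_num
    have hab : (3 - 2 * Real.sqrt 2) ^ ((1 : ℝ) / 3) * (3 + 2 * Real.sqrt 2) ^ ((1 : ℝ) / 3)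
        = 1 := by
      have h1 : ((3 - 2 * Real.sqrt 2) ^ ((1 : ℝ) / 3) * (3 + 2 * Real.sqrt 2) ^ ((1 : ℝ) / 3)) ^ 3
          = 1 := by
        rw [mul_pow, ha3, hb3]; nlinarith
      nlinarith [mul_nonneg ha0 hb0,
        sq_nonneg ((3 - 2 * Real.sqrt 2) ^ ((1 : ℝ) / 3) * (3 + 2 * Real.sqrt 2) ^ ((1 : ℝ) / 3) - 1),
        sq_nonneg ((3 - 2 * Real.sqrt 2) ^ ((1 : ℝ) / 3) * (3 + 2 * Real.sqrt 2) ^ ((1 : ℝ) / 3) + 1)]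
    linear_combination ha3 + hb3
      + (3 * ((3 - 2 * Real.sqrt 2) ^ ((1 : ℝ) / 3) + (3 + 2 * Real.sqrt 2) ^ ((1 : ℝ) / 3))) * hab
  obtain ⟨t, ht3, hδ₀⟩ := hT
  have ht2 : 2 < t := by nlinarith [sq_nonneg (t + 1)]
  have ht52 : t < 5 / 2 := by nlinarith [sq_nonneg (t + 1)]
  have hδ2 : δ₀ > 2 := by rw [hδ₀]; linarith
  set s := Real.sqrt δ₀ with hs_def
  have hs0 : 0 ≤ s := Real.sqrt_nonneg _
  have hs2 : s ^ 2 = 1 + t / 2 := by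
    rw [hs_def, Real.sq_sqrt (by linarith : (0:ℝ) ≤ δ₀), hδ₀]
  have hrnn : 0 ≤ (10 - t - t ^ 2) / (4 * (t - 2)) := by
    apply div_nonneg <;> nlinarith
  have hrsq : ((10 - t - t ^ 2) / (4 * (t - 2))) ^ 2 = δ₀ := by
    rw [hδ₀, div_pow, div_eq_iff (pow_ne_zero 2 (by nlinarith : (4 * (t - 2)) ≠ 0))]
    linear_combination (t - 6) * ht3
  have hs_eq : s = (10 - t - t ^ 2) / (4 * (t - 2)) := by
    rw [hs_def, ← hrsq, Real.sqrt_sq hrnn]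
  have hslin : 4 * s * (t - 2) = 10 - t - t ^ 2 := by
    have hne : t - 2 ≠ 0 := by nlinarith
    rw [hs_eq]; field_simp
  have hP : 2 * s ^ 4 + 4 * s ^ 3 - 3 * s ^ 2 - 8 * s - 4 = 0 := by
    linear_combination (2 * s ^ 2 + 2 + t + 4 * s - 3) * hs2 + (1/2) * hslin
  have hs2gt : 2 < s ^ 2 := by rw [hs2]; linarith
  have hs1 : 1 < s := by
    by_contra h
    push_neg at h
    nlinarith [mul_nonneg hs0 (sub_nonneg.mpr h)]
  have hmain : (δ₀ / 4) / (δ₀ / 2 - 1) = (1 + s) ^ 2 := by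
    have hδs : δ₀ = s ^ 2 := by rw [hδ₀, ← hs2]
    rw [hδs, div_eq_iff (by nlinarith : s ^ 2 / 2 - 1 ≠ 0)]
    linear_combination (-1/4) * hP
  refine ⟨⟨hδ2, hmain⟩, ?_⟩
  intro δ hδ heq
  set u := Real.sqrt δ with hu_def
  have hu0 : 0 ≤ u := Real.sqrt_nonneg _
  have hu2 : u ^ 2 = δ := Real.sq_sqrt (by linarith)
  have hu2gt : 2 < u ^ 2 := by rw [hu2]; exact hδ
  have hu1 : 1 < u := by
    by_contra h
    push_neg at h
    nlinarith [mul_nonneg hu0 (sub_nonneg.mpr h)]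
  have hPu : 2 * u ^ 4 + 4 * u ^ 3 - 3 * u ^ 2 - 8 * u - 4 = 0 := by
    rw [← hu2] at heq
    rw [div_eq_iff (by nlinarith : u ^ 2 / 2 - 1 ≠ 0)] at heq
    linear_combination (-4) * heq
  have hQ : (s - u) * (2 * (u^3 + u^2*s + u*s^2 + s^3) + 4 * (u^2 + u*s + s^2)
      - 3 * (u + s) - 8) = 0 := by
    linear_combination hP - hPu
  have hu' : (0:ℝ) < u := lt_trans one_pos hu1
  have hs' : (0:ℝ) < s := lt_trans one_pos hs1
  have hA : 0 < 2*u^3 + 4*u^2 - 3*u - 4 := by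
    nlinarith [mul_pos (sub_pos.mpr hu1) (by linarith : (0:ℝ) < u^2 - 2)]
  have hB : 0 < 2*s^3 + 4*s^2 - 3*s - 4 := by
    nlinarith [mul_pos (sub_pos.mpr hs1) (by linarith : (0:ℝ) < s^2 - 2)]
  have hQpos : 0 < 2 * (u^3 + u^2*s + u*s^2 + s^3) + 4 * (u^2 + u*s + s^2)
      - 3 * (u + s) - 8 := by
    nlinarith [hA, hB, mul_pos (mul_pos hu' hu') hs', mul_pos (mul_pos hs' hs') hu',
      mul_pos hu' hs']
  have hsu : s = u := by
    rcases mul_eq_zero.mp hQ with h | h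
    · linarith
    · linarith
  rw [← hu2, ← hsu, hs_def, Real.sq_sqrt (by linarith : (0:ℝ) ≤ δ₀)]
end
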